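/- If Λ is a symbol with rk(Λ) = n and def(Λ) = ±2, then δ(Λ) ≤ n − 1. Moreover δ(Λ) = n−1 if and only if Λ is equivalent to ({k}, {n−k+1, 1, 0}) or ({n−k+1, 1, 0}, {k}) for some 0 ≤ k ≤ n−1. -/

import Mathlib

def srank (Λ : Finset ℕ × Finset ℕ) : ℤ :=
  (∑ a ∈ Λ.1, (a : ℤ)) + (∑ b ∈ Λ.2, (b : ℤ)) -
    ((Λ.1.card + Λ.2.card : ℤ) - 1) ^ 2 / 4

def sdefect (Λ : Finset ℕ × Finset ℕ) : ℤ :=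
  (Λ.1.card : ℤ) - (Λ.2.card : ℤ)

def shiftS (Λ : Finset ℕ × Finset ℕ) : Finset ℕ × Finset ℕ :=
  (Λ.1.image (· + 1) ∪ {0}, Λ.2.image (· + 1) ∪ {0})

def sequiv : (Finset ℕ × Finset ℕ) → (Finset ℕ × Finset ℕ) → Prop :=
  Relation.EqvGen (fun Λ Λ' => Λ' = shiftS Λ)

def upsRowFull (A : Finset ℕ) : List ℤ :=
  ((A.sort (· ≤ ·)).reverse).mapIdx fun i a => (a : ℤ) - ((A.card : ℤ) - 1 - i)

def upsRow (A : Finset ℕ) : List ℤ :=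
  ((upsRowFull A).reverse.dropWhile (· == 0)).reverse

def upsSize (Λ : Finset ℕ × Finset ℕ) : ℤ :=
  (upsRow Λ.1).sum + (upsRow Λ.2).sum

def deltaRow (A : Finset ℕ) : ℤ :=
  if h : A.Nonempty then (A.max' h : ℤ) - ((A.card : ℤ) - 1) else 0

def deltaS (Λ : Finset ℕ × Finset ℕ) : ℤ :=
  deltaRow Λ.1 + deltaRow Λ.2

/-! ### Auxiliary lemmas -/

lemma sum_min : ∀ (c : ℕ) (A : Finset ℕ), A.card = c →
    (∑ i ∈ Finset.range c, i ≤ ∑ a ∈ A, a) ∧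
    (∑ a ∈ A, a = ∑ i ∈ Finset.range c, i → A = Finset.range c) := by
  intro c
  induction c with
  | zero => intro A hA
            have : A = ∅ := Finset.card_eq_zero.mp hA
            subst this; simp
  | succ c ih =>
    intro A hA
    have hne : A.Nonempty := Finset.card_pos.mp (by omega)
    set M := A.max' hne with hM
    have hMem : M ∈ A := A.max'_mem hne
    have hsub : A ⊆ Finset.range (M + 1) := by
      intro a ha
      simp only [Finset.mem_range]
      exact Nat.lt_succ_of_le (A.le_max' a ha)
    have hMc : c ≤ M := by
      have := Finset.card_le_card hsub
      rw [Finset.card_range] at this; omega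
    have hce : (A.erase M).card = c := by
      simp [Finset.card_erase_of_mem hMem, hA]
    have hsum : ∑ a ∈ A, a = M + ∑ a ∈ A.erase M, a :=
      (Finset.add_sum_erase A id hMem).symm
    obtain ⟨ih1, ih2⟩ := ih (A.erase M) hce
    rw [Finset.sum_range_succ]
    constructor
    · omega
    · intro he
      have h1 : M = c ∧ ∑ a ∈ A.erase M, a = ∑ i ∈ Finset.range c, i := by omega
      have h2 := ih2 h1.2
      rw [Finset.range_add_one, ← h2]
      rw [← h1.1]
      exact (Finset.insert_erase hMem).symm

lemma shift_row_eq (S : Finset ℕ) : S.image (· + 1) ∪ {0} = insert 0 (S.image (· + 1)) := by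
  ext x; simp [or_comm]

lemma zero_not_mem_image (S : Finset ℕ) : 0 ∉ S.image (· + 1) := by
  simp

lemma shift_row_card (S : Finset ℕ) : (S.image (· + 1) ∪ {0}).card = S.card + 1 := by
  rw [shift_row_eq, Finset.card_insert_of_notMem (zero_not_mem_image S),
    Finset.card_image_of_injective _ (add_left_injective 1)]

lemma shift_row_sum (S : Finset ℕ) :
    ∑ a ∈ (S.image (· + 1) ∪ {0}), a = (∑ a ∈ S, a) + S.card := by
  rw [shift_row_eq, Finset.sum_insert (zero_not_mem_image S),
    Finset.sum_image (by intro x _ y _ h; simp only at h; omega)]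
  simp [Finset.sum_add_distrib]

lemma shift_row_max (S : Finset ℕ) (h : S.Nonempty) (h2 : (S.image (· + 1) ∪ {0}).Nonempty) :
    (S.image (· + 1) ∪ {0}).max' h2 = S.max' h + 1 := by
  apply le_antisymm
  · apply Finset.max'_le
    intro y hy
    rcases Finset.mem_union.mp hy with hy | hy
    · obtain ⟨x, hx, rfl⟩ := Finset.mem_image.mp hy
      have := S.le_max' x hx; omega
    · simp at hy; omega
  · apply Finset.le_max'
    apply Finset.mem_union_left
    exact Finset.mem_image.mpr ⟨S.max' h, S.max'_mem h, rfl⟩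

lemma intSum (S : Finset ℕ) : (∑ a ∈ S, (a : ℤ)) = ((∑ a ∈ S, a : ℕ) : ℤ) := by
  push_cast; rfl

lemma srank_shift (Λ : Finset ℕ × Finset ℕ) : srank (shiftS Λ) = srank Λ := by
  obtain ⟨A, B⟩ := Λ
  simp only [srank, shiftS, shift_row_card, intSum, shift_row_sum]
  push_cast
  set m : ℤ := (A.card : ℤ) + (B.card : ℤ) with hm
  have h1 : ((A.card:ℤ) + 1 + ((B.card:ℤ) + 1) - 1) ^ 2 = (m - 1) ^ 2 + 4 * m := by rw [hm]; ring
  have h2 : ((m - 1) ^ 2 + 4 * m) / 4 = (m - 1) ^ 2 / 4 + m := by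
    rw [mul_comm]; exact Int.add_mul_ediv_right _ _ (by norm_num)
  rw [h1, h2]; ring

lemma sdefect_shift (Λ : Finset ℕ × Finset ℕ) : sdefect (shiftS Λ) = sdefect Λ := by
  obtain ⟨A, B⟩ := Λ
  simp only [sdefect, shiftS, shift_row_card]
  push_cast; ring

lemma deltaRow_shift (S : Finset ℕ) : deltaRow (S.image (· + 1) ∪ {0}) = deltaRow S := by
  have hne : (S.image (· + 1) ∪ {0}).Nonempty := ⟨0, by simp⟩
  rcases S.eq_empty_or_nonempty with rfl | h
  · simp only [deltaRow, dif_pos hne, dif_neg Finset.not_nonempty_empty]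
    have h1 : (∅ : Finset ℕ).image (· + 1) ∪ {0} = {0} := by simp
    have h2 := shift_row_card (∅ : Finset ℕ)
    rw [h2]
    have : ((∅ : Finset ℕ).image (· + 1) ∪ {0}).max' hne = 0 := by
      apply le_antisymm
      · apply Finset.max'_le; intro y hy; rw [h1] at hy; simp at hy; omega
      · omega
    rw [this]; simp
  · rw [deltaRow, deltaRow, dif_pos hne, dif_pos h, shift_row_max S h hne, shift_row_card]
    push_cast; ring

lemma deltaS_shift (Λ : Finset ℕ × Finset ℕ) : deltaS (shiftS Λ) = deltaS Λ := by
  obtain ⟨A, B⟩ := Λ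
  simp only [deltaS, shiftS, deltaRow_shift]

lemma sequiv_invariant {α : Type*} (f : Finset ℕ × Finset ℕ → α)
    (hf : ∀ Λ, f (shiftS Λ) = f Λ) {Λ Λ' : Finset ℕ × Finset ℕ} (h : sequiv Λ Λ') :
    f Λ = f Λ' := by
  induction h with
  | rel _ _ h => rw [h, hf]
  | refl => rfl
  | symm _ _ _ ih => exact ih.symm
  | trans _ _ _ _ _ ih1 ih2 => exact ih1.trans ih2

lemma sequiv_swap {Λ Λ' : Finset ℕ × Finset ℕ} (h : sequiv Λ Λ') :
    sequiv (Λ.2, Λ.1) (Λ'.2, Λ'.1) := by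
  induction h with
  | rel x y h => exact Relation.EqvGen.rel _ _ (by rw [h]; rfl)
  | refl => exact Relation.EqvGen.refl _
  | symm _ _ _ ih => exact Relation.EqvGen.symm _ _ ih
  | trans _ _ _ _ _ ih1 ih2 => exact Relation.EqvGen.trans _ _ _ ih1 ih2

lemma range_shift (m : ℕ) : (Finset.range m).image (· + 1) ∪ {0} = Finset.range (m + 1) := by
  ext x
  simp only [Finset.mem_union, Finset.mem_image, Finset.mem_range, Finset.mem_singleton]
  constructor
  · rintro (⟨a, ha, rfl⟩ | rfl) <;> omega
  · intro h
    cases x with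
    | zero => right; rfl
    | succ y => left; exact ⟨y, by omega, rfl⟩

lemma row_shift (x m : ℕ) :
    (insert x (Finset.range m)).image (· + 1) ∪ {0} = insert (x + 1) (Finset.range (m + 1)) := by
  rw [Finset.image_insert, Finset.insert_union, range_shift]

lemma shift_canon (x y m r : ℕ) :
    shiftS (insert x (Finset.range m), insert y (Finset.range r)) =
      (insert (x + 1) (Finset.range (m + 1)), insert (y + 1) (Finset.range (r + 1))) := by
  simp only [shiftS, row_shift]

lemma seq_iter (a k : ℕ) (j : ℕ) :
    sequiv (insert a (Finset.range 2), insert k (Finset.range 0))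
      (insert (a + j) (Finset.range (j + 2)), insert (k + j) (Finset.range j)) := by
  induction j with
  | zero => exact Relation.EqvGen.refl _
  | succ j ih =>
    refine Relation.EqvGen.trans _ _ _ ih (Relation.EqvGen.rel _ _ ?_)
    rw [shift_canon]
    ring_nf

lemma shift_b0 (M : ℕ) :
    shiftS (insert M (Finset.range 1), ∅) =
      (insert (M + 1) (Finset.range 2), insert 0 (Finset.range 0)) := by
  simp only [shiftS, row_shift]
  simp

lemma gauss_int (m : ℕ) : 2 * (∑ i ∈ Finset.range m, (i : ℤ)) = m * (m - 1) := by
  induction m with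
  | zero => simp
  | succ m ih =>
    rw [Finset.sum_range_succ]
    push_cast
    push_cast at ih
    ring_nf
    ring_nf at ih
    nlinarith [ih]

lemma max'_eq {S : Finset ℕ} (h : S.Nonempty) (m : ℕ) (hm : m ∈ S)
    (hall : ∀ y ∈ S, y ≤ m) : S.max' h = m :=
  le_antisymm (Finset.max'_le _ _ _ hall) (Finset.le_max' _ _ hm)

lemma range_two : (Finset.range 2 : Finset ℕ) = {1, 0} := by decide

lemma singleton_eq (k : ℕ) : (insert k (Finset.range 0) : Finset ℕ) = {k} := by simp

/-- The main combinatorial lemma, for defect exactly 2. -/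
lemma main2 (A B : Finset ℕ) (n : ℕ) (hcard : A.card = B.card + 2)
    (hrk : srank (A, B) = n) :
    deltaS (A, B) ≤ (n : ℤ) - 1 ∧
      (deltaS (A, B) = (n : ℤ) - 1 →
        ∃ k ≤ n - 1, sequiv (A, B) ({n - k + 1, 1, 0}, {k})) := by
  set b := B.card with hb
  have hAne : A.Nonempty := Finset.card_pos.mp (by omega)
  set MA := A.max' hAne with hMA
  have hMAmem : MA ∈ A := A.max'_mem hAne
  have hsumA : ∑ a ∈ A, a = MA + ∑ a ∈ A.erase MA, a :=
    (Finset.add_sum_erase A id hMAmem).symm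
  have hcA : (A.erase MA).card = b + 1 := by
    simp [Finset.card_erase_of_mem hMAmem, hcard]
  obtain ⟨hA1, hA2⟩ := sum_min (b + 1) (A.erase MA) hcA
  have hMAge : b + 1 ≤ MA := by
    by_contra hlt
    have : A ⊆ Finset.range (b + 2) := by
      intro a ha
      simp only [Finset.mem_range]
      have := A.le_max' a ha
      omega
    have h2 := Finset.card_le_card this
    rw [Finset.card_range, hcard] at h2
    have : A = Finset.range (b + 2) := Finset.eq_of_subset_of_card_le this (by simp [Finset.card_range, hcard])
    have : MA = b + 1 := by
      rw [hMA]
      apply max'_eq _ _ (by rw [this]; simp)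
      intro y hy
      rw [this, Finset.mem_range] at hy
      omega
    omega
  -- rank in ℤ
  have hGA := gauss_int (b + 1)
  have hsrk : (n : ℤ) = (∑ a ∈ A, (a : ℤ)) + (∑ x ∈ B, (x : ℤ)) - (b : ℤ) * ((b : ℤ) + 1) := by
    rw [← hrk]
    simp only [srank]
    have hcards : ((A.card : ℤ) + (B.card : ℤ) - 1) = 2 * (b : ℤ) + 1 := by
      rw [hcard]; push_cast; ring
    rw [hcards]
    have hD : ((2 * (b : ℤ) + 1)) ^ 2 / 4 = (b : ℤ) * ((b : ℤ) + 1) := by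
      rw [show ((2 * (b : ℤ) + 1)) ^ 2 = 1 + ((b : ℤ) * ((b : ℤ) + 1)) * 4 by ring,
        Int.add_mul_ediv_right _ _ (by norm_num)]
      norm_num
    rw [hD]
  have hdA : deltaRow A = (MA : ℤ) - ((b : ℤ) + 1) := by
    rw [deltaRow, dif_pos hAne, ← hMA, hcard]
    push_cast; ring
  rcases Nat.eq_zero_or_pos b with hb0 | hbpos
  · -- case b = 0 : B = ∅
    have hBe : B = ∅ := Finset.card_eq_zero.mp (by omega)
    subst hBe
    have hdB : deltaRow (∅ : Finset ℕ) = 0 := by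
      rw [deltaRow, dif_neg Finset.not_nonempty_empty]
    have hdS : deltaS (A, ∅) = (MA : ℤ) - 1 := by
      simp only [deltaS, hdA, hdB, hb0]
      push_cast; ring
    have hSEA : 0 ≤ ∑ a ∈ A.erase MA, a := Nat.zero_le _
    have hn : (n : ℤ) = (MA : ℤ) + ((∑ a ∈ A.erase MA, a : ℕ) : ℤ) := by
      rw [hsrk]
      simp only [hb0]
      rw [intSum, hsumA]
      push_cast
      ring
    constructor
    · rw [hdS]; omega
    · intro heq
      rw [hdS] at heq
      have hSEA0 : ∑ a ∈ A.erase MA, a = 0 := by omega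
      have hAeq : A.erase MA = Finset.range 1 := by
        apply hA2
        rw [hb0] at *
        simpa using hSEA0
      have hAform : A = insert MA (Finset.range 1) := by
        rw [← hAeq]
        exact (Finset.insert_erase hMAmem).symm
      refine ⟨0, Nat.zero_le _, ?_⟩
      have hstep : sequiv (A, ∅) (insert (MA + 1) (Finset.range 2), insert 0 (Finset.range 0)) := by
        apply Relation.EqvGen.rel
        rw [hAform, shift_b0]
      have hMAn : MA = n := by omega
      have hform : ({n - 0 + 1, 1, 0} : Finset ℕ) = insert (MA + 1) (Finset.range 2) := by
        rw [range_two, hMAn]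
        norm_num
      rw [hform, show ({0} : Finset ℕ) = insert 0 (Finset.range 0) from (singleton_eq 0).symm]
      exact hstep
  · -- case b ≥ 1
    have hBne : B.Nonempty := Finset.card_pos.mp hbpos
    set MB := B.max' hBne with hMB
    have hMBmem : MB ∈ B := B.max'_mem hBne
    have hsumB : ∑ a ∈ B, a = MB + ∑ a ∈ B.erase MB, a :=
      (Finset.add_sum_erase B id hMBmem).symm
    have hcB : (B.erase MB).card = b - 1 := by
      simp [Finset.card_erase_of_mem hMBmem, hb]
    obtain ⟨hB1, hB2⟩ := sum_min (b - 1) (B.erase MB) hcB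
    have hMBge : b - 1 ≤ MB := by
      by_contra hlt
      have hsub : B ⊆ Finset.range b := by
        intro a ha
        simp only [Finset.mem_range]
        have := B.le_max' a ha
        omega
      have h2 := Finset.card_le_card hsub
      rw [Finset.card_range] at h2
      have heq : B = Finset.range b := Finset.eq_of_subset_of_card_le hsub (by simp [Finset.card_range, hb])
      have : MB = b - 1 := by
        rw [hMB]
        apply max'_eq _ _ (by rw [heq]; simp; omega)
        intro y hy
        rw [heq, Finset.mem_range] at hy
        omega
      omega
    have hGB := gauss_int (b - 1)
    have hdB : deltaRow B = (MB : ℤ) - ((b : ℤ) - 1) := by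
      rw [deltaRow, dif_pos hBne, ← hMB, ← hb]
    have hdS : deltaS (A, B) = (MA : ℤ) + (MB : ℤ) - 2 * (b : ℤ) := by
      simp only [deltaS, hdA, hdB]; ring
    -- key inequalities in ℤ
    have hSEA : ((∑ i ∈ Finset.range (b + 1), i : ℕ) : ℤ) ≤ ((∑ a ∈ A.erase MA, a : ℕ) : ℤ) := by
      exact_mod_cast hA1
    have hSEB : ((∑ i ∈ Finset.range (b - 1), i : ℕ) : ℤ) ≤ ((∑ a ∈ B.erase MB, a : ℕ) : ℤ) := by
      exact_mod_cast hB1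
    have hGA' : 2 * ((∑ i ∈ Finset.range (b + 1), i : ℕ) : ℤ) = ((b : ℤ) + 1) * (b : ℤ) := by
      rw [← intSum]
      rw [gauss_int (b + 1)]
      push_cast
      ring
    have hGB' : 2 * ((∑ i ∈ Finset.range (b - 1), i : ℕ) : ℤ) = ((b : ℤ) - 1) * ((b : ℤ) - 2) := by
      rw [← intSum, gauss_int (b - 1)]
      have hc : ((b - 1 : ℕ) : ℤ) = (b : ℤ) - 1 := by omega
      rw [hc]; ring
    have hn : (n : ℤ) = (MA : ℤ) + ((∑ a ∈ A.erase MA, a : ℕ) : ℤ) + (MB : ℤ)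
        + ((∑ a ∈ B.erase MB, a : ℕ) : ℤ) - (b : ℤ) * ((b : ℤ) + 1) := by
      rw [hsrk, intSum A, intSum B, hsumA, hsumB]
      push_cast
      ring
    have he1 : ((b : ℤ) + 1) * (b : ℤ) = (b : ℤ) * (b : ℤ) + (b : ℤ) := by ring
    have he2 : ((b : ℤ) - 1) * ((b : ℤ) - 2) = (b : ℤ) * (b : ℤ) - 3 * (b : ℤ) + 2 := by ring
    have he3 : (b : ℤ) * ((b : ℤ) + 1) = (b : ℤ) * (b : ℤ) + (b : ℤ) := by ring
    constructor
    · rw [hdS]; linarith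
    · intro heq
      rw [hdS] at heq
      have hEA : ((∑ a ∈ A.erase MA, a : ℕ) : ℤ) = ((∑ i ∈ Finset.range (b + 1), i : ℕ) : ℤ) := by
        linarith
      have hEB : ((∑ a ∈ B.erase MB, a : ℕ) : ℤ) = ((∑ i ∈ Finset.range (b - 1), i : ℕ) : ℤ) := by
        linarith
      have hAeq : A.erase MA = Finset.range (b + 1) := hA2 (by exact_mod_cast hEA)
      have hBeq : B.erase MB = Finset.range (b - 1) := hB2 (by exact_mod_cast hEB)
      have hAform : A = insert MA (Finset.range (b + 1)) := by
        rw [← hAeq]; exact (Finset.insert_erase hMAmem).symm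
      have hBform : B = insert MB (Finset.range (b - 1)) := by
        rw [← hBeq]; exact (Finset.insert_erase hMBmem).symm
      set j := b - 1 with hj
      have hjb : b = j + 1 := by omega
      set a := MA - j with ha
      set kk := MB - j with hkk
      have hMAa : MA = a + j := by omega
      have hMBkk : MB = kk + j := by omega
      have ha2 : 2 ≤ a := by omega
      -- the sequiv
      have hchain := seq_iter a kk j
      rw [← hMAa, ← hMBkk] at hchain
      have hAr : insert MA (Finset.range (j + 2)) = A := by
        rw [hAform, hjb]
      have hBr : insert MB (Finset.range j) = B := by
        rw [hBform, hj]
      rw [hAr, hBr] at hchain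
      have hseq : sequiv (A, B) (insert a (Finset.range 2), insert kk (Finset.range 0)) :=
        Relation.EqvGen.symm _ _ hchain
      -- arithmetic: a = n - kk + 1, kk ≤ n - 1
      have hkkn : (kk : ℤ) ≤ (n : ℤ) - 1 := by omega
      have hna : (a : ℤ) = (n : ℤ) - (kk : ℤ) + 1 := by omega
      refine ⟨kk, by omega, ?_⟩
      have hform : ({n - kk + 1, 1, 0} : Finset ℕ) = insert a (Finset.range 2) := by
        rw [range_two]
        have : n - kk + 1 = a := by omega
        rw [this]
      rw [hform, show ({kk} : Finset ℕ) = insert kk (Finset.range 0) from (singleton_eq kk).symm]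
      exact hseq

lemma srank_swap (A B : Finset ℕ) : srank (B, A) = srank (A, B) := by
  simp only [srank]; ring

lemma deltaS_swap (A B : Finset ℕ) : deltaS (B, A) = deltaS (A, B) := by
  simp only [deltaS]; ring

lemma deltaRow_one (k : ℕ) : deltaRow ({k} : Finset ℕ) = (k : ℤ) := by
  rw [deltaRow, dif_pos ⟨k, Finset.mem_singleton_self k⟩]
  simp

lemma card_three (m : ℕ) (hm : 2 ≤ m) : ({m, 1, 0} : Finset ℕ).card = 3 := by
  rw [show ({m, 1, 0} : Finset ℕ) = insert m {1, 0} from rfl,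
    Finset.card_insert_of_notMem (by simp; omega)]
  decide

lemma deltaRow_three (m : ℕ) (hm : 2 ≤ m) : deltaRow ({m, 1, 0} : Finset ℕ) = (m : ℤ) - 2 := by
  have hne : ({m, 1, 0} : Finset ℕ).Nonempty := ⟨m, by simp⟩
  rw [deltaRow, dif_pos hne, card_three m hm,
    max'_eq hne m (by simp) (by intro y hy; simp at hy; omega)]
  push_cast; ring

lemma reverse_delta (n k : ℕ) (hn : 1 ≤ n) (hk : k ≤ n - 1) :
    deltaS ({k}, {n - k + 1, 1, 0}) = (n : ℤ) - 1 := by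
  have hm : 2 ≤ n - k + 1 := by omega
  simp only [deltaS, deltaRow_one, deltaRow_three _ hm]
  have : ((n - k + 1 : ℕ) : ℤ) = (n : ℤ) - (k : ℤ) + 1 := by omega
  rw [this]; ring

theorem delta_bound_defect_two (Λ : Finset ℕ × Finset ℕ) (n : ℕ)
    (hrk : srank Λ = n) (hdef : sdefect Λ = 2 ∨ sdefect Λ = -2) :
    deltaS Λ ≤ (n : ℤ) - 1 ∧
      (deltaS Λ = (n : ℤ) - 1 ↔
        ∃ k ≤ n - 1,
          sequiv Λ ({k}, {n - k + 1, 1, 0}) ∨ sequiv Λ ({n - k + 1, 1, 0}, {k})) := by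
  obtain ⟨A, B⟩ := Λ
  have hrev : (∃ k ≤ n - 1,
      sequiv (A, B) ({k}, {n - k + 1, 1, 0}) ∨ sequiv (A, B) ({n - k + 1, 1, 0}, {k})) →
      deltaS (A, B) = (n : ℤ) - 1 := by
    rintro ⟨k, hk, hc | hc⟩
    · have hdel := sequiv_invariant deltaS deltaS_shift hc
      have hdf := sequiv_invariant sdefect sdefect_shift hc
      rcases Nat.eq_zero_or_pos n with rfl | hn
      · have hk0 : k = 0 := by omega
        subst hk0
        rw [show sdefect ({0}, {0 - 0 + 1, 1, 0}) = -1 from by decide] at hdf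
        omega
      · rw [hdel, reverse_delta n k hn hk]
    · have hdel := sequiv_invariant deltaS deltaS_shift hc
      have hdf := sequiv_invariant sdefect sdefect_shift hc
      rcases Nat.eq_zero_or_pos n with rfl | hn
      · have hk0 : k = 0 := by omega
        subst hk0
        rw [show sdefect ({0 - 0 + 1, 1, 0}, {0}) = 1 from by decide] at hdf
        omega
      · rw [hdel, deltaS_swap, reverse_delta n k hn hk]
  rcases hdef with hd | hd
  · have hcard : A.card = B.card + 2 := by
      simp only [sdefect] at hd; omega
    obtain ⟨h1, h2⟩ := main2 A B n hcard hrk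
    exact ⟨h1, ⟨fun he => (h2 he).elim fun k hk => ⟨k, hk.1, Or.inr hk.2⟩, hrev⟩⟩
  · have hcard : B.card = A.card + 2 := by
      simp only [sdefect] at hd; omega
    have hrk' : srank (B, A) = n := by rw [srank_swap]; exact hrk
    obtain ⟨h1, h2⟩ := main2 B A n hcard hrk'
    rw [deltaS_swap] at h1 h2
    refine ⟨h1, ⟨fun he => ?_, hrev⟩⟩
    obtain ⟨k, hk1, hk2⟩ := h2 he
    exact ⟨k, hk1, Or.inl (sequiv_swap hk2)⟩
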